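/- Let q* > 0 and define the operator W on the space of continuous functions on [α₀, ξ] by W(u)(η) = q*·(Φ(ξ, u) − Φ(η, u)) for η ∈ [α₀, ξ]. Then for all continuous u, u* : [α₀, ξ] → ℝ one has ‖W(u) − W(u*)‖ ≤ 2·q*·Φ̃(α₀, ξ)·‖u − u*‖, where ‖·‖ denotes the supremum norm on [α₀, ξ]. -/

import Mathlib

open Real MeasureTheory Set

/-- `E(η,u) = exp(−(2/a)·∫_{α₀}^{η} s·N*(u(s))/L*(u(s)) ds)` -/
noncomputable def Efun (a : ℝ) (L N : ℝ → ℝ) (α₀ : ℝ) (u : ℝ → ℝ) (η : ℝ) : ℝ :=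
  Real.exp (-(2 / a) * ∫ s in α₀..η, s * N (u s) / L (u s))

/-- `Φ(η,u) = α₀^ν·∫_{α₀}^{η} E(v,u)/(v^ν·L*(u(v))) dv` -/
noncomputable def Phi (a ν : ℝ) (L N : ℝ → ℝ) (α₀ : ℝ) (u : ℝ → ℝ) (η : ℝ) : ℝ :=
  α₀ ^ ν * ∫ v in α₀..η, Efun a L N α₀ u v / (v ^ ν * L (u v))

/-- Supremum norm on the interval `[α₀, ξ]`. -/
noncomputable def supNorm (α₀ ξ : ℝ) (f : ℝ → ℝ) : ℝ :=
  ⨆ η : Icc α₀ ξ, |f η|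

/-- The Lipschitz bound `Φ̃(α₀, η)` from Lemma 4. -/
noncomputable def PhiTilde (a ν Lm NM Ltil Ntil α₀ η : ℝ) : ℝ :=
  (α₀ ^ ν / Lm ^ 2) *
    ((1 / a) * (Ntil + NM * Ltil / Lm) *
        (η ^ (3 - ν) / (3 - ν) - α₀ ^ 2 * η ^ (1 - ν) / (1 - ν) +
          2 * α₀ ^ (3 - ν) / ((3 - ν) * (1 - ν))) +
      Ltil * (η ^ (1 - ν) - α₀ ^ (1 - ν)) / (1 - ν))

lemma exp_neg_lip {x y : ℝ} (hx : 0 ≤ x) (hy : 0 ≤ y) :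
    |Real.exp (-x) - Real.exp (-y)| ≤ |x - y| := by
  wlog h : y ≤ x generalizing x y
  · rw [abs_sub_comm, abs_sub_comm x y]; exact this hy hx (le_of_not_ge h)
  have key : Real.exp (-x) = Real.exp (-y) * Real.exp (-(x - y)) := by
    rw [← Real.exp_add]; ring_nf
  have h1 : Real.exp (-y) ≤ 1 := Real.exp_le_one_iff.mpr (by linarith)
  have h2 : 1 - (x - y) ≤ Real.exp (-(x - y)) := by
    have := Real.add_one_le_exp (-(x - y)); linarith
  have h3 : Real.exp (-(x - y)) ≤ 1 := Real.exp_le_one_iff.mpr (by linarith)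
  have h4 := Real.exp_pos (-y)
  rw [abs_of_nonpos (by nlinarith), abs_of_nonneg (by linarith)]
  nlinarith


set_option maxHeartbeats 1000000 in
theorem stmt_5 (a ν α₀ ξ : ℝ) (L N : ℝ → ℝ) (Lm LM Nm NM Ltil Ntil q : ℝ)
    (ha : 0 < a) (hν0 : 0 < ν) (hν1 : ν < 1) (hα₀ : 0 < α₀) (hαξ : α₀ < ξ)
    (hq : 0 < q)
    (hLcont : Continuous L) (hNcont : Continuous N)
    (hLm : 0 < Lm) (hNm : 0 < Nm) (hLtil : 0 < Ltil) (hNtil : 0 < Ntil)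
    (hL : ∀ x : ℝ, Lm ≤ L x ∧ L x ≤ LM)
    (hN : ∀ x : ℝ, Nm ≤ N x ∧ N x ≤ NM)
    (hLlip : ∀ x y : ℝ, |L x - L y| ≤ Ltil * |x - y|)
    (hNlip : ∀ x y : ℝ, |N x - N y| ≤ Ntil * |x - y|) :
    ∀ u ustar : ℝ → ℝ, ContinuousOn u (Icc α₀ ξ) → ContinuousOn ustar (Icc α₀ ξ) →
      supNorm α₀ ξ (fun η =>
          q * (Phi a ν L N α₀ u ξ - Phi a ν L N α₀ u η) -
            q * (Phi a ν L N α₀ ustar ξ - Phi a ν L N α₀ ustar η)) ≤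
        2 * q * PhiTilde a ν Lm NM Ltil Ntil α₀ ξ *
          supNorm α₀ ξ (fun η => u η - ustar η) := by
  intro u ustar hu hustar
  have hI : α₀ ≤ ξ := hαξ.le
  have hmemα : α₀ ∈ Icc α₀ ξ := ⟨le_rfl, hI⟩
  have hmemξ : ξ ∈ Icc α₀ ξ := ⟨hI, le_rfl⟩
  haveI : Nonempty (Icc α₀ ξ) := ⟨⟨α₀, hmemα⟩⟩
  set M := supNorm α₀ ξ (fun η => u η - ustar η) with hMdef
  have hbdd : BddAbove (range fun η : Icc α₀ ξ => |u η - ustar η|) := by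
    obtain ⟨C, hC⟩ := (isCompact_Icc.image_of_continuousOn ((hu.sub hustar).abs)).bddAbove
    exact ⟨C, by rintro x ⟨⟨y, hy⟩, rfl⟩; exact hC ⟨y, hy, rfl⟩⟩
  have hMle : ∀ x ∈ Icc α₀ ξ, |u x - ustar x| ≤ M := fun x hx =>
    le_ciSup hbdd (⟨x, hx⟩ : Icc α₀ ξ)
  have hM0 : 0 ≤ M := (abs_nonneg _).trans (hMle α₀ hmemα)
  clear_value M
  have hLpos : ∀ x, 0 < L x := fun x => lt_of_lt_of_le hLm (hL x).1
  have hNpos : ∀ x, 0 < N x := fun x => lt_of_lt_of_le hNm (hN x).1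
  set CR := Ntil / Lm + NM * Ltil / Lm ^ 2 with hCRdef
  have hNM0 : (0:ℝ) ≤ NM := hNm.le.trans ((hN 0).1.trans (hN 0).2)
  have hCR0 : 0 ≤ CR := by
    rw [hCRdef]
    exact add_nonneg (div_nonneg hNtil.le hLm.le)
      (div_nonneg (mul_nonneg hNM0 hLtil.le) (by positivity))
  clear_value CR
  -- ratio Lipschitz
  have hratio : ∀ x y : ℝ, |N x / L x - N y / L y| ≤ CR * |x - y| := by
    intro x y
    have hLx := hLpos x; have hLy := hLpos y
    have h1 : N x / L x - N y / L y
        = (N x - N y) / L x + N y * (L y - L x) / (L x * L y) := by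
      field_simp; ring
    rw [h1]
    have t1 : |(N x - N y) / L x| ≤ Ntil * |x - y| / Lm := by
      rw [abs_div, abs_of_pos hLx]
      exact div_le_div₀ (mul_nonneg hNtil.le (abs_nonneg _)) (hNlip x y) hLm (hL x).1
    have t2 : |N y * (L y - L x) / (L x * L y)| ≤ NM * (Ltil * |x - y|) / (Lm * Lm) := by
      rw [abs_div, abs_mul, abs_of_pos (hNpos y), abs_of_pos (by positivity : (0:ℝ) < L x * L y)]
      refine div_le_div₀ (mul_nonneg hNM0 (mul_nonneg hLtil.le (abs_nonneg _))) ?_ (by positivity) ?_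
      · have hly : |L y - L x| ≤ Ltil * |x - y| := by
          rw [abs_sub_comm]; exact hLlip x y
        exact mul_le_mul (hN y).2 hly (abs_nonneg _) hNM0
      · exact mul_le_mul (hL x).1 (hL y).1 hLm.le hLx.le
    calc |(N x - N y) / L x + N y * (L y - L x) / (L x * L y)|
        ≤ |(N x - N y) / L x| + |N y * (L y - L x) / (L x * L y)| := abs_add_le _ _
      _ ≤ Ntil * |x - y| / Lm + NM * (Ltil * |x - y|) / (Lm * Lm) := add_le_add t1 t2
      _ = CR * |x - y| := by rw [hCRdef]; field_simp
  -- continuity / integrability of the inner integrand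
  have hcontg : ∀ w : ℝ → ℝ, ContinuousOn w (Icc α₀ ξ) →
      ContinuousOn (fun s => s * N (w s) / L (w s)) (Icc α₀ ξ) := by
    intro w hw
    exact (continuousOn_id.mul (hNcont.comp_continuousOn hw)).div
      (hLcont.comp_continuousOn hw) (fun x _ => (hLpos _).ne')
  have hsub : ∀ v ∈ Icc α₀ ξ, uIcc α₀ v ⊆ Icc α₀ ξ := by
    intro v hv
    rw [uIcc_of_le hv.1]
    exact Icc_subset_Icc le_rfl hv.2
  have hint : ∀ (w : ℝ → ℝ), ContinuousOn w (Icc α₀ ξ) → ∀ v ∈ Icc α₀ ξ,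
      IntervalIntegrable (fun s => s * N (w s) / L (w s)) volume α₀ v := by
    intro w hw v hv
    exact ((hcontg w hw).mono (hsub v hv)).intervalIntegrable
  -- inner integral nonneg
  have hInn : ∀ (w : ℝ → ℝ), ∀ v ∈ Icc α₀ ξ,
      0 ≤ ∫ s in α₀..v, s * N (w s) / L (w s) := by
    intro w v hv
    apply intervalIntegral.integral_nonneg hv.1
    intro s hs
    have hs0 : 0 < s := lt_of_lt_of_le hα₀ hs.1
    exact div_nonneg (mul_nonneg hs0.le (hNpos _).le) (hLpos _).le
  -- inner integral Lipschitz
  have hIdiff : ∀ v ∈ Icc α₀ ξ,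
      |(∫ s in α₀..v, s * N (u s) / L (u s)) - ∫ s in α₀..v, s * N (ustar s) / L (ustar s)|
        ≤ CR * M * (v ^ 2 - α₀ ^ 2) / 2 := by
    intro v hv
    have hsq : (0:ℝ) ≤ v ^ 2 - α₀ ^ 2 := by nlinarith [hv.1, hα₀.le]
    rw [← intervalIntegral.integral_sub (hint u hu v hv) (hint ustar hustar v hv)]
    have hbnd : ∀ᵐ t ∂volume.restrict (Set.uIoc α₀ v),
        ‖t * N (u t) / L (u t) - t * N (ustar t) / L (ustar t)‖ ≤ CR * M * t := by
      rw [ae_restrict_iff' measurableSet_uIoc]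
      refine ae_of_all _ (fun t ht => ?_)
      rw [uIoc_of_le hv.1] at ht
      have ht0 : 0 < t := lt_of_lt_of_le hα₀ ht.1.le
      have htI : t ∈ Icc α₀ ξ := ⟨ht.1.le, ht.2.trans hv.2⟩
      have heq : t * N (u t) / L (u t) - t * N (ustar t) / L (ustar t)
          = t * (N (u t) / L (u t) - N (ustar t) / L (ustar t)) := by ring
      rw [Real.norm_eq_abs, heq, abs_mul, abs_of_pos ht0]
      calc t * |N (u t) / L (u t) - N (ustar t) / L (ustar t)|
          ≤ t * (CR * |u t - ustar t|) := by gcongr; exact hratio _ _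
        _ ≤ t * (CR * M) := by gcongr; exact hMle t htI
        _ = CR * M * t := by ring
    have hgint : IntervalIntegrable (fun t => CR * M * t) volume α₀ v :=
      (continuous_const.mul continuous_id).intervalIntegrable _ _
    have hkey := intervalIntegral.norm_integral_le_abs_of_norm_le hbnd hgint
    rw [Real.norm_eq_abs] at hkey
    refine hkey.trans ?_
    have hval : ∫ t in α₀..v, CR * M * t = CR * M * ((v ^ 2 - α₀ ^ 2) / 2) := by
      rw [intervalIntegral.integral_const_mul, integral_id]
    rw [hval, abs_of_nonneg (by positivity)]
    exact le_of_eq (by ring)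
  -- Efun bounds
  have hEle1 : ∀ (w : ℝ → ℝ), ∀ v ∈ Icc α₀ ξ, Efun a L N α₀ w v ≤ 1 := by
    intro w v hv
    apply Real.exp_le_one_iff.mpr
    have h0 := hInn w v hv
    have h2a : (0:ℝ) ≤ 2 / a := by positivity
    nlinarith
  have hEdiff : ∀ v ∈ Icc α₀ ξ,
      |Efun a L N α₀ u v - Efun a L N α₀ ustar v| ≤ CR * M / a * (v ^ 2 - α₀ ^ 2) := by
    intro v hv
    have h1 := hInn u v hv
    have h2 := hInn ustar v hv
    have h2a : (0:ℝ) ≤ 2 / a := by positivity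
    unfold Efun
    rw [neg_mul, neg_mul]
    refine (exp_neg_lip (mul_nonneg h2a h1) (mul_nonneg h2a h2)).trans ?_
    rw [← mul_sub, abs_mul, abs_of_nonneg h2a]
    calc 2 / a * |(∫ s in α₀..v, s * N (u s) / L (u s))
          - ∫ s in α₀..v, s * N (ustar s) / L (ustar s)|
        ≤ 2 / a * (CR * M * (v ^ 2 - α₀ ^ 2) / 2) := by gcongr; exact hIdiff v hv
      _ = CR * M / a * (v ^ 2 - α₀ ^ 2) := by field_simp
  -- continuity of Efun and of the Phi integrand
  have hEcont : ∀ w : ℝ → ℝ, ContinuousOn w (Icc α₀ ξ) →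
      ContinuousOn (fun v => Efun a L N α₀ w v) (Icc α₀ ξ) := by
    intro w hw
    have hig : IntegrableOn (fun s => s * N (w s) / L (w s)) (uIcc α₀ ξ) volume := by
      rw [uIcc_of_le hI]
      exact (hcontg w hw).integrableOn_Icc
    have hprim := intervalIntegral.continuousOn_primitive_interval hig
    rw [uIcc_of_le hI] at hprim
    exact Real.continuous_exp.comp_continuousOn (continuousOn_const.mul hprim)
  have hvpos : ∀ x ∈ Icc α₀ ξ, (0:ℝ) < x := fun x hx => lt_of_lt_of_le hα₀ hx.1
  have hvpow : ContinuousOn (fun v : ℝ => v ^ ν) (Icc α₀ ξ) :=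
    ContinuousOn.rpow_const continuousOn_id (fun x hx => Or.inl (hvpos x hx).ne')
  have hvpowneg : ContinuousOn (fun v : ℝ => v ^ (-ν)) (Icc α₀ ξ) :=
    ContinuousOn.rpow_const continuousOn_id (fun x hx => Or.inl (hvpos x hx).ne')
  have hFcont : ∀ w : ℝ → ℝ, ContinuousOn w (Icc α₀ ξ) →
      ContinuousOn (fun v => Efun a L N α₀ w v / (v ^ ν * L (w v))) (Icc α₀ ξ) := by
    intro w hw
    refine (hEcont w hw).div (hvpow.mul (hLcont.comp_continuousOn hw)) ?_
    intro x hx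
    exact (mul_pos (Real.rpow_pos_of_pos (hvpos x hx) ν) (hLpos _)).ne'
  -- the dominating function
  set g : ℝ → ℝ := fun v =>
    M * (CR / a * (v ^ 2 - α₀ ^ 2) / Lm + Ltil / Lm ^ 2) * v ^ (-ν) with hgdef
  clear_value g
  have hgcont : ContinuousOn g (Icc α₀ ξ) := by
    rw [hgdef]
    apply ContinuousOn.mul _ hvpowneg
    exact (continuous_const.mul
      (((continuous_const.mul ((continuous_pow 2).sub continuous_const)).div_const Lm).add
        continuous_const)).continuousOn
  have hgnn : ∀ v ∈ Icc α₀ ξ, 0 ≤ g v := by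
    intro v hv
    have hsq : (0:ℝ) ≤ v ^ 2 - α₀ ^ 2 := by nlinarith [hv.1, hα₀.le]
    have := (Real.rpow_pos_of_pos (hvpos v hv) (-ν)).le
    simp only [hgdef]
    have h1 : 0 ≤ CR / a * (v ^ 2 - α₀ ^ 2) / Lm + Ltil / Lm ^ 2 :=
      add_nonneg (div_nonneg (mul_nonneg (div_nonneg hCR0 ha.le) hsq) hLm.le)
        (div_nonneg hLtil.le (by positivity))
    exact mul_nonneg (mul_nonneg hM0 h1) this
  have hgint : ∀ v ∈ Icc α₀ ξ, IntervalIntegrable g volume α₀ v := fun v hv =>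
    ((hgcont.mono (hsub v hv)).intervalIntegrable)
  -- pointwise bound on the Phi integrand difference
  have hFdiff : ∀ t ∈ Icc α₀ ξ, α₀ < t →
      |Efun a L N α₀ u t / (t ^ ν * L (u t)) - Efun a L N α₀ ustar t / (t ^ ν * L (ustar t))|
        ≤ g t := by
    intro t htI _
    have ht0 : 0 < t := hvpos t htI
    have hsq : (0:ℝ) ≤ t ^ 2 - α₀ ^ 2 := by nlinarith [htI.1, hα₀.le]
    have hP : 0 < t ^ ν := Real.rpow_pos_of_pos ht0 ν
    have hLu := (hL (u t)).1; have hLs := (hL (ustar t)).1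
    have hLu0 := hLpos (u t); have hLs0 := hLpos (ustar t)
    have hEs0 : 0 < Efun a L N α₀ ustar t := Real.exp_pos _
    have hEs1 : Efun a L N α₀ ustar t ≤ 1 := hEle1 ustar t htI
    have hEd := hEdiff t htI
    have hLd : |L (ustar t) - L (u t)| ≤ Ltil * M := by
      calc |L (ustar t) - L (u t)| ≤ Ltil * |ustar t - u t| := hLlip _ _
        _ ≤ Ltil * M := by
            rw [abs_sub_comm]; exact mul_le_mul_of_nonneg_left (hMle t htI) hLtil.le
    have decomp : Efun a L N α₀ u t / (t ^ ν * L (u t))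
          - Efun a L N α₀ ustar t / (t ^ ν * L (ustar t))
        = ((Efun a L N α₀ u t - Efun a L N α₀ ustar t) / L (u t)
          + Efun a L N α₀ ustar t * (L (ustar t) - L (u t)) / (L (u t) * L (ustar t)))
            / t ^ ν := by
      field_simp; ring
    rw [decomp, abs_div, abs_of_pos hP]
    have hA : |(Efun a L N α₀ u t - Efun a L N α₀ ustar t) / L (u t)|
        ≤ CR * M / a * (t ^ 2 - α₀ ^ 2) / Lm := by
      rw [abs_div, abs_of_pos hLu0]
      exact div_le_div₀ (by positivity) hEd hLm hLu
    have hB : |Efun a L N α₀ ustar t * (L (ustar t) - L (u t)) / (L (u t) * L (ustar t))|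
        ≤ 1 * (Ltil * M) / (Lm * Lm) := by
      rw [abs_div, abs_mul, abs_of_pos hEs0, abs_of_pos (mul_pos hLu0 hLs0)]
      refine div_le_div₀ (mul_nonneg zero_le_one (mul_nonneg hLtil.le hM0)) ?_ (by positivity) ?_
      · exact mul_le_mul hEs1 hLd (abs_nonneg _) zero_le_one
      · exact mul_le_mul hLu hLs hLm.le hLu0.le
    have hnum := (abs_add_le _ _).trans (add_le_add hA hB)
    calc |(Efun a L N α₀ u t - Efun a L N α₀ ustar t) / L (u t)
          + Efun a L N α₀ ustar t * (L (ustar t) - L (u t)) / (L (u t) * L (ustar t))| / t ^ ν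
        ≤ (CR * M / a * (t ^ 2 - α₀ ^ 2) / Lm + 1 * (Ltil * M) / (Lm * Lm)) / t ^ ν := by
          gcongr
      _ = g t := by
          simp only [hgdef]
          rw [Real.rpow_neg ht0.le]
          field_simp
  -- value of the integral of g over [α₀, ξ]
  have hrint1 : ∫ v in α₀..ξ, v ^ (-ν) = (ξ ^ (1 - ν) - α₀ ^ (1 - ν)) / (1 - ν) := by
    rw [integral_rpow (Or.inl (by linarith))]
    rw [show -ν + 1 = 1 - ν by ring]
  have hrint2 : ∫ v in α₀..ξ, v ^ ((2:ℝ) - ν) = (ξ ^ (3 - ν) - α₀ ^ (3 - ν)) / (3 - ν) := by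
    rw [integral_rpow (Or.inl (by linarith))]
    rw [show (2:ℝ) - ν + 1 = 3 - ν by ring]
  have hgval : ∫ v in α₀..ξ, g v
      = M * CR / (a * Lm) * ((ξ ^ (3 - ν) - α₀ ^ (3 - ν)) / (3 - ν))
        + (M * (Ltil / Lm ^ 2) - M * CR * α₀ ^ 2 / (a * Lm))
          * ((ξ ^ (1 - ν) - α₀ ^ (1 - ν)) / (1 - ν)) := by
    have hgeq : EqOn g (fun v => M * CR / (a * Lm) * v ^ ((2:ℝ) - ν)
        + (M * (Ltil / Lm ^ 2) - M * CR * α₀ ^ 2 / (a * Lm)) * v ^ (-ν)) (uIcc α₀ ξ) := by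
      intro v hv
      rw [uIcc_of_le hI] at hv
      have hv0 : 0 < v := hvpos v hv
      have hsplit : v ^ ((2:ℝ) - ν) = v ^ 2 * v ^ (-ν) := by
        rw [show (2:ℝ) - ν = 2 + (-ν) by ring, Real.rpow_add hv0, Real.rpow_two]
      simp only [hgdef]
      rw [hsplit]
      field_simp [ha.ne', hLm.ne']
      ring
    rw [intervalIntegral.integral_congr hgeq]
    have hi1 : IntervalIntegrable (fun v : ℝ => M * CR / (a * Lm) * v ^ ((2:ℝ) - ν))
        volume α₀ ξ := by
      apply ContinuousOn.intervalIntegrable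
      rw [uIcc_of_le hI]
      exact continuousOn_const.mul
        (ContinuousOn.rpow_const continuousOn_id (fun x hx => Or.inl (hvpos x hx).ne'))
    have hi2 : IntervalIntegrable (fun v : ℝ =>
        (M * (Ltil / Lm ^ 2) - M * CR * α₀ ^ 2 / (a * Lm)) * v ^ (-ν)) volume α₀ ξ := by
      apply ContinuousOn.intervalIntegrable
      rw [uIcc_of_le hI]
      exact continuousOn_const.mul hvpowneg
    rw [intervalIntegral.integral_add hi1 hi2, intervalIntegral.integral_const_mul,
      intervalIntegral.integral_const_mul, hrint1, hrint2]
  -- Phi difference bound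
  have hPhidiff : ∀ η ∈ Icc α₀ ξ,
      |Phi a ν L N α₀ u η - Phi a ν L N α₀ ustar η|
        ≤ PhiTilde a ν Lm NM Ltil Ntil α₀ ξ * M := by
    intro η hη
    have hFu_int : IntervalIntegrable
        (fun v => Efun a L N α₀ u v / (v ^ ν * L (u v))) volume α₀ η :=
      ((hFcont u hu).mono (hsub η hη)).intervalIntegrable
    have hFs_int : IntervalIntegrable
        (fun v => Efun a L N α₀ ustar v / (v ^ ν * L (ustar v))) volume α₀ η :=
      ((hFcont ustar hustar).mono (hsub η hη)).intervalIntegrable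
    unfold Phi
    rw [← mul_sub, abs_mul, abs_of_nonneg (Real.rpow_nonneg hα₀.le ν),
      ← intervalIntegral.integral_sub hFu_int hFs_int]
    have hbnd : ∀ᵐ t ∂volume.restrict (Set.uIoc α₀ η),
        ‖Efun a L N α₀ u t / (t ^ ν * L (u t))
          - Efun a L N α₀ ustar t / (t ^ ν * L (ustar t))‖ ≤ g t := by
      rw [ae_restrict_iff' measurableSet_uIoc]
      refine ae_of_all _ (fun t ht => ?_)
      rw [uIoc_of_le hη.1] at ht
      have htI : t ∈ Icc α₀ ξ := ⟨ht.1.le, ht.2.trans hη.2⟩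
      simpa [Real.norm_eq_abs] using hFdiff t htI ht.1
    have hkey := intervalIntegral.norm_integral_le_abs_of_norm_le hbnd (hgint η hη)
    rw [Real.norm_eq_abs] at hkey
    have hmono : |∫ t in α₀..η, g t| ≤ ∫ t in α₀..ξ, g t := by
      have h1 : (0:ℝ) ≤ ∫ t in α₀..η, g t := by
        apply intervalIntegral.integral_nonneg hη.1
        intro t ht
        exact hgnn t ⟨ht.1, ht.2.trans hη.2⟩
      rw [abs_of_nonneg h1]
      apply intervalIntegral.integral_mono_interval le_rfl hη.1 hη.2
      · rw [Filter.EventuallyLE]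
        rw [ae_restrict_iff' measurableSet_Ioc]
        exact ae_of_all _ (fun t ht => hgnn t ⟨ht.1.le, ht.2⟩)
      · exact hgint ξ hmemξ
    have hchain : |∫ v in α₀..η,
        (Efun a L N α₀ u v / (v ^ ν * L (u v))
          - Efun a L N α₀ ustar v / (v ^ ν * L (ustar v)))| ≤ ∫ t in α₀..ξ, g t :=
      hkey.trans hmono
    calc α₀ ^ ν * |∫ v in α₀..η,
          (Efun a L N α₀ u v / (v ^ ν * L (u v))
            - Efun a L N α₀ ustar v / (v ^ ν * L (ustar v)))|
        ≤ α₀ ^ ν * ∫ t in α₀..ξ, g t := by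
          exact mul_le_mul_of_nonneg_left hchain (Real.rpow_nonneg hα₀.le ν)
      _ = PhiTilde a ν Lm NM Ltil Ntil α₀ ξ * M := by
          rw [hgval, hCRdef]
          unfold PhiTilde
          have hA3 : α₀ ^ (3 - ν) = α₀ ^ 2 * α₀ ^ (1 - ν) := by
            rw [show (3:ℝ) - ν = 2 + (1 - ν) by ring, Real.rpow_add hα₀, Real.rpow_two]
          rw [hA3]
          have h3ν : (3:ℝ) - ν ≠ 0 := by linarith
          have h1ν : (1:ℝ) - ν ≠ 0 := by linarith
          field_simp
          ring
  -- conclude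
  unfold supNorm
  apply ciSup_le
  rintro ⟨η, hη⟩
  dsimp only
  have h1 := hPhidiff ξ hmemξ
  have h2 := hPhidiff η hη
  have hsplit : q * (Phi a ν L N α₀ u ξ - Phi a ν L N α₀ u η) -
      q * (Phi a ν L N α₀ ustar ξ - Phi a ν L N α₀ ustar η)
      = q * ((Phi a ν L N α₀ u ξ - Phi a ν L N α₀ ustar ξ)
        - (Phi a ν L N α₀ u η - Phi a ν L N α₀ ustar η)) := by ring
  rw [hsplit, abs_mul, abs_of_pos hq]
  calc q * |(Phi a ν L N α₀ u ξ - Phi a ν L N α₀ ustar ξ)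
        - (Phi a ν L N α₀ u η - Phi a ν L N α₀ ustar η)|
      ≤ q * (|Phi a ν L N α₀ u ξ - Phi a ν L N α₀ ustar ξ|
        + |Phi a ν L N α₀ u η - Phi a ν L N α₀ ustar η|) := by
        gcongr; exact abs_sub _ _
    _ ≤ q * (PhiTilde a ν Lm NM Ltil Ntil α₀ ξ * M + PhiTilde a ν Lm NM Ltil Ntil α₀ ξ * M) := by
        gcongr
    _ = 2 * q * PhiTilde a ν Lm NM Ltil Ntil α₀ ξ * M := by ring
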